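/- Let Θ ⊆ ℝ^i and Θ̃ ⊆ ℝ^j be open sets with i ≤ j, let g : Θ̃ → Θ be twice differentiable with surjective Jacobian at every point and with g(Θ̃) = Θ, let f : Θ → ℝ be twice continuously differentiable, and set f̃ = f ∘ g. If f̃ has a non-strict saddle point at θ̃ ∈ Θ̃, then f has a non-strict saddle point at θ = g(θ̃). -/

import Mathlib

open Set Topology

/-- A saddle point of `h` on `s` at `p`: a critical point (vanishing Fréchet
derivative, equivalently vanishing gradient) that is neither a local minimum
nor a local maximum. -/
def IsSaddlePointOn' {E : Type*} [NormedAddCommGroup E] [NormedSpace ℝ E]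
    (h : E → ℝ) (s : Set E) (p : E) : Prop :=
  fderiv ℝ h p = 0 ∧ ¬ IsLocalMinOn h s p ∧ ¬ IsLocalMaxOn h s p

/-- A non-strict saddle point: a saddle point at which the Hessian (the second
derivative quadratic form `v ↦ vᵀ(∇²h)v`) has no direction of strictly negative
curvature. -/
def IsNonStrictSaddlePointOn {E : Type*} [NormedAddCommGroup E] [NormedSpace ℝ E]
    (h : E → ℝ) (s : Set E) (p : E) : Prop :=
  IsSaddlePointOn' h s p ∧ ¬ ∃ v : E, iteratedFDeriv ℝ 2 h p ![v, v] < 0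

/-- Proposition 5: if `f̃ = f ∘ g` has a non-strict saddle point at `θ̃ ∈ Θ̃`,
then `f` has a non-strict saddle point at `θ = g θ̃`. -/
theorem nonstrict_saddle_point_of_nonstrict_saddle_point
    (i j : ℕ) (hij : i ≤ j)
    (Θ : Set (EuclideanSpace ℝ (Fin i))) (Θt : Set (EuclideanSpace ℝ (Fin j)))
    (hΘ : IsOpen Θ) (hΘt : IsOpen Θt)
    (g : EuclideanSpace ℝ (Fin j) → EuclideanSpace ℝ (Fin i))
    (hg1 : ∀ x ∈ Θt, DifferentiableAt ℝ g x)
    (hg2 : ∀ x ∈ Θt, DifferentiableAt ℝ (fderiv ℝ g) x)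
    (hsub : ∀ x ∈ Θt, Function.Surjective (fderiv ℝ g x))
    (himg : g '' Θt = Θ)
    (f : EuclideanSpace ℝ (Fin i) → ℝ)
    (hf : ContDiffOn ℝ 2 f Θ)
    (θt : EuclideanSpace ℝ (Fin j)) (hθt : θt ∈ Θt)
    (hsaddle : IsNonStrictSaddlePointOn (f ∘ g) Θt θt) :
    IsNonStrictSaddlePointOn f Θ (g θt) := by
  obtain ⟨⟨hcrit, hmin, hmax⟩, hness⟩ := hsaddle
  have hmaps : MapsTo g Θt Θ := fun x hx => himg ▸ mem_image_of_mem g hx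
  have hθ : g θt ∈ Θ := hmaps hθt
  have hfd : ∀ y ∈ Θ, DifferentiableAt ℝ f y := fun y hy =>
    ((hf.contDiffAt (hΘ.mem_nhds hy)).differentiableAt (by norm_num))
  have hgd := hg1 θt hθt
  -- chain rule on Θt
  have hchain : ∀ y ∈ Θt,
      fderiv ℝ (f ∘ g) y = (fderiv ℝ f (g y)).comp (fderiv ℝ g y) := fun y hy =>
    fderiv_comp y (hfd _ (hmaps hy)) (hg1 y hy)
  -- critical point of f
  have hD0 : fderiv ℝ f (g θt) = 0 := by
    ext w
    obtain ⟨v, hv⟩ := hsub θt hθt w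
    have h1 : fderiv ℝ f (g θt) w = fderiv ℝ (f ∘ g) θt v := by
      rw [hchain θt hθt, ← hv]; rfl
    rw [h1, hcrit]; rfl
  -- pullback of local min/max filters
  have htend : Filter.Tendsto g (𝓝[Θt] θt) (𝓝[Θ] (g θt)) :=
    hgd.continuousAt.continuousWithinAt.tendsto_nhdsWithin hmaps
  refine ⟨⟨hD0, ?_, ?_⟩, ?_⟩
  · intro h
    exact hmin (htend.eventually h)
  · intro h
    exact hmax (htend.eventually h)
  · -- Hessian: no negative direction
    rintro ⟨w, hw⟩
    obtain ⟨v, hv⟩ := hsub θt hθt w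
    apply hness
    refine ⟨v, ?_⟩
    -- compute the Hessian of f ∘ g at θt
    have hfC : ContDiffAt ℝ 2 f (g θt) := hf.contDiffAt (hΘ.mem_nhds hθ)
    have hf'd : DifferentiableAt ℝ (fderiv ℝ f) (g θt) :=
      (hfC.fderiv_right (m := 1) (by norm_num)).differentiableAt (by norm_num)
    set Dg := fderiv ℝ g θt with hDg
    set H := fderiv ℝ (fderiv ℝ f) (g θt) with hH
    have hc : HasFDerivAt (fun y => fderiv ℝ f (g y)) (H.comp Dg) θt :=
      HasFDerivAt.comp θt hf'd.hasFDerivAt hgd.hasFDerivAt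
    have hd : HasFDerivAt (fderiv ℝ g) (fderiv ℝ (fderiv ℝ g) θt) θt :=
      (hg2 θt hθt).hasFDerivAt
    have hF := hc.clm_comp hd
    have heq : (fun y => (fderiv ℝ f (g y)).comp (fderiv ℝ g y)) =ᶠ[𝓝 θt]
        fderiv ℝ (f ∘ g) := by
      filter_upwards [hΘt.mem_nhds hθt] with y hy
      exact (hchain y hy).symm
    have hF2 := hF.congr_of_eventuallyEq heq.symm
    have h2 : fderiv ℝ (fderiv ℝ (f ∘ g)) θt =
        (ContinuousLinearMap.compL ℝ _ _ _ (fderiv ℝ f (g θt))).comp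
            (fderiv ℝ (fderiv ℝ g) θt) +
          ((ContinuousLinearMap.compL ℝ _ _ _).flip Dg).comp (H.comp Dg) :=
      hF2.fderiv
    have key : iteratedFDeriv ℝ 2 (f ∘ g) θt ![v, v] = H (Dg v) (Dg v) := by
      rw [iteratedFDeriv_two_apply, h2]
      simp [hD0]
    have key2 : iteratedFDeriv ℝ 2 f (g θt) ![w, w] = H w w := by
      rw [iteratedFDeriv_two_apply]
      simp [hH]
    rw [key, hv]
    rw [key2] at hw
    exact hw
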